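/- Let n be a positive integer, S a symmetric positive definite real n×n matrix, a ∈ ℝⁿ, and σ₀ ≥ 0 a real number. Then the function σ ↦ ln det(S + σ·a·aᵀ) is differentiable at σ₀ with derivative equal to (aᵀ S⁻¹ a)/(1 + σ₀ · aᵀ S⁻¹ a). -/

import Mathlib

open Matrix

lemma det_rank_one_update {n : ℕ} (S : Matrix (Fin n) (Fin n) ℝ) (hS : S.PosDef)
    (a : Fin n → ℝ) (σ : ℝ) :
    (S + σ • Matrix.vecMulVec a a).det = S.det * (1 + σ * (a ⬝ᵥ S⁻¹.mulVec a)) := by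
  have hA : IsUnit S.det := (hS.det_pos.ne').isUnit
  have h1 : σ • Matrix.vecMulVec a a = replicateCol Unit (σ • a) * replicateRow Unit a := by
    ext i j
    simp [Matrix.vecMulVec_apply, Matrix.mul_apply]
    ring
  rw [h1, Matrix.det_add_replicateCol_mul_replicateRow hA]
  congr 1
  rw [det_unique]
  simp [Matrix.mul_apply, Matrix.mulVec, dotProduct, Finset.mul_sum, Finset.sum_mul]
  rw [Finset.sum_comm]
  congr 1; ext i; congr 1; ext j; ring

/-- Stationarity computation for the water-filling optimality conditions: for `S`
symmetric positive definite, `a ∈ ℝⁿ` and `σ₀ ≥ 0`, the function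
`σ ↦ ln det(S + σ a aᵀ)` has derivative `(aᵀ S⁻¹ a) / (1 + σ₀ aᵀ S⁻¹ a)` at `σ₀`. -/
theorem log_det_rank_one_update_hasDerivAt
    {n : ℕ} (hn : 0 < n) (S : Matrix (Fin n) (Fin n) ℝ) (hS : S.PosDef)
    (a : Fin n → ℝ) (σ₀ : ℝ) (hσ₀ : 0 ≤ σ₀) :
    HasDerivAt (fun σ : ℝ => Real.log ((S + σ • Matrix.vecMulVec a a).det))
      ((a ⬝ᵥ S⁻¹.mulVec a) / (1 + σ₀ * (a ⬝ᵥ S⁻¹.mulVec a))) σ₀ := by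
  set c := a ⬝ᵥ S⁻¹.mulVec a with hc
  have hcnn : 0 ≤ c := by
    have := hS.inv.posSemidef.dotProduct_mulVec_nonneg a
    simpa [hc, dotProduct, Matrix.mulVec] using this
  have hpos : 0 < 1 + σ₀ * c := by positivity
  have hdet : 0 < S.det := hS.det_pos
  have hfun : (fun σ : ℝ => Real.log ((S + σ • Matrix.vecMulVec a a).det))
      = fun σ : ℝ => Real.log (S.det * (1 + σ * c)) := by
    funext σ; rw [det_rank_one_update S hS a σ]
  rw [hfun]
  have h1 : HasDerivAt (fun σ : ℝ => S.det * (1 + σ * c)) (S.det * c) σ₀ := by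
    simpa using (((hasDerivAt_id σ₀).mul_const c).const_add 1).const_mul S.det
  have h2 := h1.log (by positivity)
  convert h2 using 1
  field_simp
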